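/- The scaled de Rham map σ satisfies the scaled Leibniz rule: for α ∈ Λ^i ⊗ S_a and β ∈ Λ^j ⊗ S_b with i+a+j+b > 0 (and characteristic 0 or p ≥ i+a+j+b), σ(αβ) = (1/(i+a+j+b)) · ((i+a)·σ(α)·β + (-1)^i (j+b)·α·σ(β)), where the product is the tensor product of the exterior algebra product and the polynomial product. -/

import Mathlib

set_option linter.unusedSectionVars false


/-
Concrete model of the bigraded module 𝕊 = ⊕ Λ^i ⊗_R S_m, where Λ is the
exterior algebra over R on e_1,…,e_n and S = R[y_1,…,y_n]:
the free R-module with basis the pairs (s, μ) of a finset s ⊆ Fin n (the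
wedge monomial e_s, sorted increasingly) and a multiset μ over Fin n (the
monomial y_μ).  The exterior degree is s.card and the polynomial degree is
Multiset.card μ.
-/

open Finsupp

variable (n : ℕ) (R : Type*) [CommRing R] [Algebra ℚ R]

/-- Basis of Λ ⊗ S: a wedge monomial (finset) and a polynomial monomial
(multiset). -/
abbrev KBasis := Finset (Fin n) × Multiset (Fin n)

/-- The free module Λ ⊗_R S on that basis. -/
abbrev KMod := KBasis n →₀ R

/-- The sign (-1)^{#{b ∈ s | b < t}} produced by inserting `e_t` into the
sorted wedge monomial `e_s` in front position t. -/
def ksgn (s : Finset (Fin n)) (t : Fin n) : ℤ := (-1) ^ (s.filter (· < t)).card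

/-- Extend a basis-indexed family of values to an R-linear endomorphism. -/
noncomputable def klift (f : KBasis n → KMod n R) : KMod n R →ₗ[R] KMod n R :=
  Finsupp.lsum ℕ fun p => LinearMap.toSpanSingleton R (KMod n R) (f p)

/-- Value of the contraction κ on a basis element:
κ(e_{t_1}∧⋯∧e_{t_i} ⊗ f) = Σ_j (-1)^j e_{t_1}∧⋯∧ê_{t_j}∧⋯∧e_{t_i} ⊗ y_{t_j}f. -/
noncomputable def kappaB (p : KBasis n) : KMod n R :=
  ∑ t ∈ p.1, (-(ksgn n p.1 t)) • Finsupp.single (p.1.erase t, t ::ₘ p.2) (1 : R)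

/-- The contraction κ : Λ^i ⊗ S_m → Λ^{i-1} ⊗ S_{m+1} (as a single R-linear
endomorphism of the total module). -/
noncomputable def kappa : KMod n R →ₗ[R] KMod n R := klift n R (kappaB n R)

/-- Value of the scaled de Rham map σ on a basis element:
σ(e_{t_1}∧⋯∧e_{t_i} ⊗ y_{p_1}⋯y_{p_m})
  = (1/(i+m)) Σ_j e_{p_j}∧e_{t_1}∧⋯∧e_{t_i} ⊗ y_{p_1}⋯ŷ_{p_j}⋯y_{p_m},
zero when i = m = 0 (and wedges with repeated factors are zero). -/
noncomputable def sigmaB (p : KBasis n) : KMod n R :=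
  ((p.1.card + Multiset.card p.2 : ℚ))⁻¹ •
    (p.2.map (fun t =>
      if t ∈ p.1 then (0 : KMod n R)
      else (ksgn n p.1 t) • Finsupp.single (insert t p.1, p.2.erase t) (1 : R))).sum

/-- The scaled de Rham map σ = (1/(i+m)) Σ_j e_j ∧ (−) ⊗ ∂/∂y_j :
Λ^i ⊗ S_m → Λ^{i+1} ⊗ S_{m-1}. -/
noncomputable def sigma : KMod n R →ₗ[R] KMod n R := klift n R (sigmaB n R)

/-- `IsHomog i m x` : x lies in the bihomogeneous component Λ^i ⊗ S_m. -/
def IsHomog (i m : ℕ) (x : KMod n R) : Prop :=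
  ∀ p ∈ x.support, p.1.card = i ∧ Multiset.card p.2 = m

/-- The Koszul sign for merging the sorted wedge monomial e_s with e_t
(moving each e_a, a ∈ t, past the larger elements of s). -/
def mulsgn (s t : Finset (Fin n)) : ℤ :=
  (-1) ^ (∑ a ∈ t, (s.filter (a < ·)).card)

/-- The product on Λ ⊗ S on basis elements: wedge the exterior parts (zero if
they share a factor) and multiply the polynomial parts. -/
noncomputable def mulB (p q : KBasis n) : KMod n R :=
  if Disjoint p.1 q.1 then
    (mulsgn n p.1 q.1) • Finsupp.single (p.1 ∪ q.1, p.2 + q.2) (1 : R)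
  else 0

/-- The (bilinear) product on Λ ⊗ S. -/
noncomputable def kmul : KMod n R →ₗ[R] KMod n R →ₗ[R] KMod n R :=
  Finsupp.lsum ℕ fun p =>
    LinearMap.toSpanSingleton R (KMod n R →ₗ[R] KMod n R) (klift n R (mulB n R p))

/-
The scaled Leibniz rule for the scaled de Rham map σ: for α ∈ Λ^i ⊗ S_a and
β ∈ Λ^j ⊗ S_b with i + a + j + b > 0 (in characteristic zero, i.e. over a
ℚ-algebra),
  σ(αβ) = (1/(i+a+j+b)) ((i+a) σ(α)β + (-1)^i (j+b) α σ(β)).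
(When i = a = j = b = 0 one has σ(αβ) = 0, σ(α) = 0, σ(β) = 0 by definition.)
-/
lemma klift_single (f : KBasis n → KMod n R) (p : KBasis n) (r : R) :
    klift n R f (single p r) = r • f p := by
  simp [klift]

lemma sigma_single (p : KBasis n) (r : R) :
    sigma n R (single p r) = r • sigmaB n R p := by
  simp [sigma, klift_single]

lemma kmul_single_left (p : KBasis n) (c : R) (x : KMod n R) :
    kmul n R (single p c) x = c • klift n R (mulB n R p) x := by
  simp [kmul]

lemma kmul_single_single (p q : KBasis n) (c d : R) :
    kmul n R (single p c) (single q d) = c • d • mulB n R p q := by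
  simp [kmul_single_left, klift_single]

lemma kmul_single_right (x : KMod n R) (q : KBasis n) :
    kmul n R x (single q (1:R)) = klift n R (fun p => mulB n R p q) x := by
  induction x using Finsupp.induction_linear with
  | zero => simp
  | add f g hf hg => simp [map_add, LinearMap.add_apply, hf, hg]
  | single p c => simp [kmul_single_single, klift_single]

lemma map_sigmaB (L : KMod n R →ₗ[R] KMod n R) (p : KBasis n) :
    L (sigmaB n R p) = ((p.1.card + Multiset.card p.2 : ℚ))⁻¹ •
      (p.2.map (fun t =>
        if t ∈ p.1 then (0 : KMod n R)
        else (ksgn n p.1 t) • L (Finsupp.single (insert t p.1, p.2.erase t) (1 : R)))).sum := by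
  rw [sigmaB, LinearMap.map_smul_of_tower, map_multiset_sum, Multiset.map_map]
  congr 1
  apply congrArg Multiset.sum
  apply Multiset.map_congr rfl
  intro t _
  simp only [Function.comp_apply]
  split
  · simp
  · rw [map_zsmul]
lemma filter_insert_card (s : Finset (Fin n)) (x a : Fin n) (hx : x ∉ s) :
    ((insert x s).filter (a < ·)).card
      = (s.filter (a < ·)).card + if a < x then 1 else 0 := by
  rw [Finset.filter_insert]
  split <;> rename_i h
  · rw [Finset.card_insert_of_notMem (by simp [hx])]
  · simp

lemma card_lt_split (s : Finset (Fin n)) (x : Fin n) (hx : x ∉ s) :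
    (s.filter (· < x)).card + (s.filter (x < ·)).card = s.card := by
  rw [← Finset.card_filter_add_card_filter_not (s := s) (p := (· < x))]
  have : Finset.filter (fun a => ¬ a < x) s = Finset.filter (fun a => x < a) s := by
    apply Finset.filter_congr
    intro b hb
    simp only [not_lt, eq_iff_iff]
    constructor
    · intro h; exact lt_of_le_of_ne h (fun hh => hx (hh ▸ hb))
    · exact le_of_lt
  rw [this]

lemma sign1 (s t : Finset (Fin n)) (x : Fin n) (hd : Disjoint s t) (hx : x ∉ s ∪ t) :
    mulsgn n s t * ksgn n (s ∪ t) x = ksgn n s x * mulsgn n (insert x s) t := by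
  have hxs : x ∉ s := fun h => hx (Finset.mem_union_left _ h)
  unfold mulsgn ksgn
  rw [← pow_add, ← pow_add]
  congr 1
  rw [Finset.filter_union,
    Finset.card_union_of_disjoint (Finset.disjoint_filter_filter hd),
    Finset.sum_congr rfl (fun a _ => filter_insert_card n s x a hxs),
    Finset.sum_add_distrib]
  have : ∑ a ∈ t, (if a < x then 1 else 0) = (t.filter (· < x)).card := by
    rw [Finset.card_filter]
  omega

lemma sign2 (s t : Finset (Fin n)) (x : Fin n) (hd : Disjoint s t) (hx : x ∉ s ∪ t) :
    mulsgn n s t * ksgn n (s ∪ t) x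
      = (-1)^s.card * (ksgn n t x * mulsgn n s (insert x t)) := by
  have hxs : x ∉ s := fun h => hx (Finset.mem_union_left _ h)
  have hxt : x ∉ t := fun h => hx (Finset.mem_union_right _ h)
  unfold mulsgn ksgn
  rw [← pow_add, ← pow_add, ← pow_add]
  have h1 : ((s ∪ t).filter (· < x)).card
      = (s.filter (· < x)).card + (t.filter (· < x)).card := by
    rw [Finset.filter_union,
      Finset.card_union_of_disjoint (Finset.disjoint_filter_filter hd)]
  have h2 : ∑ a ∈ insert x t, (s.filter (a < ·)).card
      = (s.filter (x < ·)).card + ∑ a ∈ t, (s.filter (a < ·)).card :=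
    Finset.sum_insert hxt
  have h3 := card_lt_split n s x hxs
  have : s.card + ((t.filter (· < x)).card + ∑ a ∈ insert x t, (s.filter (a < ·)).card)
      = (∑ a ∈ t, (s.filter (a < ·)).card + ((s ∪ t).filter (· < x)).card)
        + 2 * (s.filter (x < ·)).card := by omega
  rw [this]
  simp [pow_add, pow_mul]
lemma smul_inv_smul_cancel' {M : Type*} [AddCommGroup M] [Module ℚ M]
    (c : ℚ) (x : M) (h : c = 0 → x = 0) : c • c⁻¹ • x = x := by
  by_cases hc : c = 0
  · simp [hc, h hc]
  · rw [smul_smul, mul_inv_cancel₀ hc, one_smul]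

lemma key (p q : KBasis n) :
    sigma n R (mulB n R p q) =
      ((p.1.card + Multiset.card p.2 + q.1.card + Multiset.card q.2 : ℚ))⁻¹ •
        (((p.1.card + Multiset.card p.2 : ℚ)) • kmul n R (sigmaB n R p) (single q (1:R)) +
          ((-1:ℚ)^p.1.card * ((q.1.card : ℚ) + Multiset.card q.2)) •
            kmul n R (single p (1:R)) (sigmaB n R q)) := by
  rw [kmul_single_right, kmul_single_left, one_smul,
    map_sigmaB n R (klift n R (fun r => mulB n R r q)) p,
    map_sigmaB n R (klift n R (mulB n R p)) q]
  simp only [klift_single, one_smul]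
  by_cases hd : Disjoint p.1 q.1
  · -- disjoint case
    rw [mulB, if_pos hd, map_zsmul, sigma_single, one_smul, sigmaB]
    simp only []
    have hM : (((p.1 ∪ q.1).card : ℚ) + Multiset.card (p.2 + q.2)) =
        ((p.1.card : ℚ) + Multiset.card p.2 + q.1.card + Multiset.card q.2) := by
      rw [Finset.card_union_of_disjoint hd, Multiset.card_add]
      push_cast; ring
    rw [hM]
    set N : ℚ := ((p.1.card : ℚ) + Multiset.card p.2 + q.1.card + Multiset.card q.2) with hN
    have hcancel1 : ((p.1.card : ℚ) + Multiset.card p.2) = 0 →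
        (p.2.map (fun t => if t ∈ p.1 then (0:KMod n R)
          else ksgn n p.1 t • mulB n R (insert t p.1, p.2.erase t) q)).sum = 0 := by
      intro hc
      have h0 : p.1.card + Multiset.card p.2 = 0 := by exact_mod_cast hc
      have : p.2 = 0 := Multiset.card_eq_zero.mp (by omega)
      rw [this]
      simp
    have hcancel2 : ((q.1.card : ℚ) + Multiset.card q.2) = 0 →
        (q.2.map (fun t => if t ∈ q.1 then (0:KMod n R)
          else ksgn n q.1 t • mulB n R p (insert t q.1, q.2.erase t))).sum = 0 := by
      intro hc
      have h0 : q.1.card + Multiset.card q.2 = 0 := by exact_mod_cast hc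
      have : q.2 = 0 := Multiset.card_eq_zero.mp (by omega)
      rw [this]
      simp
    rw [smul_inv_smul_cancel' _ _ hcancel1, mul_smul, smul_inv_smul_cancel' _ _ hcancel2]
    rw [← Int.cast_smul_eq_zsmul ℚ (mulsgn n p.1 q.1), smul_comm]
    congr 1
    rw [Multiset.map_add, Multiset.sum_add, smul_add]
    congr 1
    · rw [Multiset.smul_sum, Multiset.map_map]
      apply congrArg Multiset.sum
      apply Multiset.map_congr rfl
      intro t ht
      simp only [Function.comp_apply]
      by_cases h1 : t ∈ p.1
      · rw [if_pos (Finset.mem_union_left _ h1), if_pos h1, smul_zero]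
      · rw [if_neg h1]
        by_cases h2 : t ∈ q.1
        · rw [if_pos (Finset.mem_union_right _ h2), smul_zero, mulB,
            if_neg (fun hdd => (Finset.disjoint_insert_left.mp hdd).1 h2), smul_zero]
        · have hnu : t ∉ p.1 ∪ q.1 := by simp [h1, h2]
          rw [if_neg hnu, mulB, if_pos (Finset.disjoint_insert_left.mpr ⟨h2, hd⟩)]
          have hA : insert t (p.1 ∪ q.1) = insert t p.1 ∪ q.1 := (Finset.insert_union t p.1 q.1).symm
          have hB : (p.2 + q.2).erase t = p.2.erase t + q.2 := Multiset.erase_add_left_pos q.2 ht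
          rw [hA, hB, ← Int.cast_smul_eq_zsmul ℚ (ksgn n (p.1 ∪ q.1) t), smul_smul,
            ← Int.cast_smul_eq_zsmul ℚ (ksgn n p.1 t),
            ← Int.cast_smul_eq_zsmul ℚ (mulsgn n (insert t p.1) q.1), smul_smul]
          congr 1
          rw [← Int.cast_mul, ← Int.cast_mul, sign1 n p.1 q.1 t hd hnu]
    · rw [Multiset.smul_sum, Multiset.smul_sum, Multiset.map_map, Multiset.map_map]
      apply congrArg Multiset.sum
      apply Multiset.map_congr rfl
      intro t ht
      simp only [Function.comp_apply]
      by_cases h2 : t ∈ q.1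
      · rw [if_pos (Finset.mem_union_right _ h2), if_pos h2, smul_zero, smul_zero]
      · rw [if_neg h2]
        by_cases h1 : t ∈ p.1
        · rw [if_pos (Finset.mem_union_left _ h1), smul_zero, mulB,
            if_neg (fun hdd => (Finset.disjoint_insert_right.mp hdd).1 h1),
            smul_zero, smul_zero]
        · have hnu : t ∉ p.1 ∪ q.1 := by simp [h1, h2]
          rw [if_neg hnu, mulB, if_pos (Finset.disjoint_insert_right.mpr ⟨h1, hd⟩)]
          have hA : insert t (p.1 ∪ q.1) = p.1 ∪ insert t q.1 := (Finset.union_insert t p.1 q.1).symm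
          have hB : (p.2 + q.2).erase t = p.2 + q.2.erase t := Multiset.erase_add_right_pos p.2 ht
          rw [hA, hB, ← Int.cast_smul_eq_zsmul ℚ (ksgn n (p.1 ∪ q.1) t), smul_smul,
            ← Int.cast_smul_eq_zsmul ℚ (ksgn n q.1 t),
            ← Int.cast_smul_eq_zsmul ℚ (mulsgn n p.1 (insert t q.1)), smul_smul, smul_smul]
          congr 1
          have h := sign2 n p.1 q.1 t hd hnu
          have h2 : ((mulsgn n p.1 q.1 * ksgn n (p.1 ∪ q.1) t : ℤ) : ℚ)
              = (((-1)^p.1.card * (ksgn n q.1 t * mulsgn n p.1 (insert t q.1)) : ℤ) : ℚ) := by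
            exact_mod_cast congrArg (Int.cast : ℤ → ℚ) h
          push_cast at h2
          linear_combination h2
  · -- non-disjoint case
    rw [mulB, if_neg hd, map_zero]
    have h1 : (p.2.map (fun t => if t ∈ p.1 then (0:KMod n R)
        else ksgn n p.1 t • mulB n R (insert t p.1, p.2.erase t) q)).sum = 0 := by
      apply Multiset.sum_eq_zero
      intro x hx
      rw [Multiset.mem_map] at hx
      obtain ⟨t, _, rfl⟩ := hx
      split
      · rfl
      · rw [mulB, if_neg (fun hdd => hd (hdd.mono_left (Finset.subset_insert t p.1))), smul_zero]
    have h2 : (q.2.map (fun t => if t ∈ q.1 then (0:KMod n R)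
        else ksgn n q.1 t • mulB n R p (insert t q.1, q.2.erase t))).sum = 0 := by
      apply Multiset.sum_eq_zero
      intro x hx
      rw [Multiset.mem_map] at hx
      obtain ⟨t, _, rfl⟩ := hx
      split
      · rfl
      · rw [mulB, if_neg (fun hdd => hd (hdd.mono_right (Finset.subset_insert t q.1))), smul_zero]
    rw [h1, h2]
    simp
lemma key2 (p q : KBasis n) (c d : R) :
    sigma n R (kmul n R (single p c) (single q d)) =
      ((p.1.card + Multiset.card p.2 + q.1.card + Multiset.card q.2 : ℚ))⁻¹ •
        (((p.1.card + Multiset.card p.2 : ℚ)) •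
            kmul n R (sigma n R (single p c)) (single q d) +
          ((-1:ℚ)^p.1.card * ((q.1.card : ℚ) + Multiset.card q.2)) •
            kmul n R (single p c) (sigma n R (single q d))) := by
  have hsq : (single q d : KMod n R) = d • single q (1:R) := by
    rw [Finsupp.smul_single', mul_one]
  have hsp : (single p c : KMod n R) = c • single p (1:R) := by
    rw [Finsupp.smul_single', mul_one]
  rw [kmul_single_single, map_smul, map_smul, sigma_single, sigma_single, key,
    hsq, hsp]
  simp only [map_smul, LinearMap.map_smul₂, LinearMap.smul_apply, smul_add]
  congr 1
  · rw [smul_comm d, smul_comm c, smul_comm d, smul_comm c, smul_comm c d]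
  · rw [smul_comm d, smul_comm c, smul_comm d, smul_comm c, smul_comm c d]
theorem sigma_scaled_Leibniz :
    ∀ i a j b : ℕ, 0 < i + a + j + b →
      ∀ α β : KMod n R, IsHomog n R i a α → IsHomog n R j b β →
        sigma n R (kmul n R α β) =
          ((i + a + j + b : ℚ))⁻¹ •
            (((i + a : ℚ)) • kmul n R (sigma n R α) β +
              (((-1 : ℚ) ^ i) * ((j : ℚ) + b)) • kmul n R α (sigma n R β)) := by
  intro i a j b _ α β hα hβ
  conv_lhs => rw [← Finsupp.sum_single α, ← Finsupp.sum_single β]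
  conv_rhs => rw [← Finsupp.sum_single α, ← Finsupp.sum_single β]
  simp only [Finsupp.sum, map_sum, LinearMap.coe_sum, Finset.sum_apply',
    LinearMap.sum_apply, Finset.smul_sum, ← Finset.sum_add_distrib]
  apply Finset.sum_congr rfl
  intro p hp
  apply Finset.sum_congr rfl
  intro q hq
  obtain ⟨hqi, hqa⟩ := hα q hq
  obtain ⟨hpj, hpb⟩ := hβ p hp
  rw [key2, hqi, hqa, hpj, hpb]
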